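/- Let H be a real Hilbert space and let U, V, W be closed subspaces of H with orthogonal projections P_U, P_V, P_W : H → H. Assume P_U − P_W and P_W − P_V are compact operators (so that P_U − P_V is also compact and U, V, W are pairwise commensurable). Define the relative dimension of a commensurable pair (X,Y) as the integer dim(X,Y) := dim(X ∩ Y^⊥) − dim(Y ∩ X^⊥). Then dim(U,V) = dim(U,W) + dim(W,V). -/

import Mathlib

open Module Submodule LinearMap FiniteDimensional

section Alg

variable {K : Type*} [Field K]
variable {X Y Z : Type*} [AddCommGroup X] [Module K X] [AddCommGroup Y] [Module K Y]
  [AddCommGroup Z] [Module K Z]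

/-- Extension lemma: finite dimensionality from a submodule and its quotient. -/
theorem fd_of_sub_quot (p : Submodule K X) (h1 : FiniteDimensional K p)
    (h2 : FiniteDimensional K (X ⧸ p)) : FiniteDimensional K X := by
  rw [FiniteDimensional, Module.finite_def]
  apply Submodule.fg_of_fg_map_of_fg_inf_ker p.mkQ
  · rw [Submodule.map_top, Submodule.range_mkQ]
    exact Module.finite_def.mp h2
  · rw [Submodule.ker_mkQ, top_inf_eq]
    exact (Submodule.fg_top p).mp (Module.finite_def.mp h1)

/-- `comap p.subtype q` is equivalent to `p ⊓ q`. -/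
noncomputable def comapSubtypeEquivInf (p q : Submodule K X) :
    (q.comap p.subtype) ≃ₗ[K] ↥(p ⊓ q) :=
  (Submodule.equivMapOfInjective p.subtype p.injective_subtype _).trans
    (LinearEquiv.ofEq _ _ (Submodule.map_comap_subtype p q))

theorem ker_comp_fd (f : X →ₗ[K] Y) (g : Y →ₗ[K] Z)
    (hkf : FiniteDimensional K (ker f)) (hkg : FiniteDimensional K (ker g)) :
    FiniteDimensional K (ker (g ∘ₗ f)) := by
  haveI := hkf; haveI := hkg
  set φ : ↥(ker (g ∘ₗ f)) →ₗ[K] Y := f.domRestrict (ker (g ∘ₗ f)) with hφ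
  have hkφ : ker φ = (ker f).comap (ker (g ∘ₗ f)).subtype := by
    ext x; simp [hφ, LinearMap.mem_ker]
  have hle : ker f ≤ ker (g ∘ₗ f) := fun x hx => by
    simp only [LinearMap.mem_ker] at hx ⊢; simp [hx]
  have hfd1 : FiniteDimensional K (ker φ) := by
    rw [hkφ]
    exact (Submodule.comapSubtypeEquivOfLe hle).symm.finiteDimensional
  have hrφ : range φ ≤ ker g := by
    rintro y ⟨⟨x, hx⟩, rfl⟩
    simpa [hφ, LinearMap.mem_ker] using hx
  have hfd2 : FiniteDimensional K (range φ) := Submodule.finiteDimensional_of_le hrφ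
  exact fd_of_sub_quot (ker φ) hfd1 (haveI := hfd2; φ.quotKerEquivRange.symm.finiteDimensional)

theorem finrank_ker_comp (f : X →ₗ[K] Y) (g : Y →ₗ[K] Z)
    (hkf : FiniteDimensional K (ker f)) (hkg : FiniteDimensional K (ker g)) :
    finrank K (ker (g ∘ₗ f)) = finrank K (ker f) + finrank K ↥(ker g ⊓ range f) := by
  haveI := hkf; haveI := hkg; haveI := ker_comp_fd f g hkf hkg
  set φ : ↥(ker (g ∘ₗ f)) →ₗ[K] Y := f.domRestrict (ker (g ∘ₗ f)) with hφ
  have hkφ : ker φ = (ker f).comap (ker (g ∘ₗ f)).subtype := by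
    ext x; simp [hφ, LinearMap.mem_ker]
  have hrφ : range φ = ker g ⊓ range f := by
    ext y
    constructor
    · rintro ⟨⟨x, hx⟩, rfl⟩
      simp only [LinearMap.mem_ker, LinearMap.comp_apply] at hx
      exact ⟨by simpa [hφ, LinearMap.mem_ker] using hx, ⟨x, rfl⟩⟩
    · rintro ⟨hy, ⟨x, rfl⟩⟩
      exact ⟨⟨x, by simpa [LinearMap.mem_ker] using hy⟩, rfl⟩
  have h1 := φ.finrank_range_add_finrank_ker
  rw [hrφ, hkφ] at h1
  rw [← h1, (Submodule.comapSubtypeEquivOfLe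
      (show ker f ≤ ker (g ∘ₗ f) from fun x hx => by
        simp only [LinearMap.mem_ker] at hx ⊢; simp [hx])).finrank_eq]
  omega

theorem beta_identity (f : X →ₗ[K] Y) (g : Y →ₗ[K] Z)
    (hcf : FiniteDimensional K (Y ⧸ range f)) (hkg : FiniteDimensional K (ker g)) :
    finrank K (Y ⧸ range f) + finrank K ↥(ker g ⊓ range f)
      = finrank K (ker g) + finrank K (Y ⧸ (range f ⊔ ker g)) := by
  haveI := hcf; haveI := hkg
  set π := (range f).mkQ with hπ
  set ψ : ↥(ker g) →ₗ[K] (Y ⧸ range f) := π.domRestrict (ker g) with hψ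
  have hkψ : ker ψ = (range f).comap (ker g).subtype := by
    ext x; simp [hψ, hπ, Submodule.Quotient.mk_eq_zero, LinearMap.mem_ker]
  have hrψ : range ψ = (ker g).map π := by
    ext y
    constructor
    · rintro ⟨x, rfl⟩; exact ⟨x.1, x.2, rfl⟩
    · rintro ⟨x, hx, rfl⟩; exact ⟨⟨x, hx⟩, rfl⟩
  -- rank-nullity on ker g
  have h1 := ψ.finrank_range_add_finrank_ker
  rw [hkψ, hrψ, (comapSubtypeEquivInf (ker g) (range f)).finrank_eq] at h1
  -- decompose Y ⧸ range f
  have h2 := Submodule.finrank_quotient_add_finrank ((ker g).map π)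
  -- identify ((Y⧸range f) ⧸ map π (ker g)) with Y ⧸ (range f ⊔ ker g)
  have hmap : (range f ⊔ ker g).map π = (ker g).map π := by
    rw [Submodule.map_sup]
    have : (range f).map π = ⊥ := by
      rw [eq_bot_iff]
      rintro x ⟨y, hy, rfl⟩
      simpa [hπ, Submodule.mkQ_apply, Submodule.Quotient.mk_eq_zero] using hy
    rw [this, bot_sup_eq]
  have e3 : ((Y ⧸ range f) ⧸ ((ker g).map π)) ≃ₗ[K] (Y ⧸ (range f ⊔ ker g)) := by
    rw [← hmap]
    exact Submodule.quotientQuotientEquivQuotient (range f) (range f ⊔ ker g) le_sup_left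
  rw [e3.finrank_eq] at h2
  omega

theorem coker_comp_aux (f : X →ₗ[K] Y) (g : Y →ₗ[K] Z)
    (hq : FiniteDimensional K (Y ⧸ (range f ⊔ ker g)))
    (hcg : FiniteDimensional K (Z ⧸ range g)) :
    FiniteDimensional K (Z ⧸ range (g ∘ₗ f)) ∧
      finrank K (Z ⧸ range (g ∘ₗ f))
        = finrank K (Z ⧸ range g) + finrank K (Y ⧸ (range f ⊔ ker g)) := by
  haveI := hq; haveI := hcg
  set m : Z →ₗ[K] (Z ⧸ range (g ∘ₗ f)) := (range (g ∘ₗ f)).mkQ with hm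
  set χ : Y →ₗ[K] (Z ⧸ range (g ∘ₗ f)) := m ∘ₗ g with hχ
  have hrχ : range χ = (range g).map m := LinearMap.range_comp g m
  have hkχ : ker χ = range f ⊔ ker g := by
    ext y
    simp only [hχ, LinearMap.mem_ker, LinearMap.comp_apply, hm, Submodule.mkQ_apply,
      Submodule.Quotient.mk_eq_zero]
    constructor
    · rintro ⟨x, hx⟩
      have : y = f x + (y - f x) := by abel
      have hmem : y - f x ∈ ker g := by
        simp only [LinearMap.mem_ker, map_sub, ← hx]
        simp [LinearMap.comp_apply]
      exact this ▸ Submodule.add_mem_sup (LinearMap.mem_range_self f x) hmem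
    · intro hy
      rcases Submodule.mem_sup.mp hy with ⟨a, ⟨x, rfl⟩, b, hb, rfl⟩
      refine ⟨x, ?_⟩
      simp only [LinearMap.mem_ker] at hb
      simp [LinearMap.comp_apply, map_add, hb]
  -- T := (range g).map m is equivalent to Y ⧸ (range f ⊔ ker g)
  have eT : (Y ⧸ (range f ⊔ ker g)) ≃ₗ[K] ↥((range g).map m) := by
    rw [← hrχ, ← hkχ]
    exact χ.quotKerEquivRange
  haveI hfdT : FiniteDimensional K ↥((range g).map m) := eT.finiteDimensional
  -- quotient of coker(g∘f) by T is coker g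
  have eQ : ((Z ⧸ range (g ∘ₗ f)) ⧸ ((range g).map m)) ≃ₗ[K] (Z ⧸ range g) :=
    Submodule.quotientQuotientEquivQuotient (range (g ∘ₗ f)) (range g)
      (LinearMap.range_comp_le_range f g)
  haveI hfdQ : FiniteDimensional K ((Z ⧸ range (g ∘ₗ f)) ⧸ ((range g).map m)) :=
    eQ.symm.finiteDimensional
  haveI hfdC : FiniteDimensional K (Z ⧸ range (g ∘ₗ f)) :=
    fd_of_sub_quot ((range g).map m) hfdT hfdQ
  have h2 := Submodule.finrank_quotient_add_finrank ((range g).map m)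
  rw [eQ.finrank_eq, ← eT.finrank_eq] at h2
  exact ⟨hfdC, by omega⟩

theorem fd_quot_sup (f : X →ₗ[K] Y) (g : Y →ₗ[K] Z)
    (hcf : FiniteDimensional K (Y ⧸ range f)) :
    FiniteDimensional K (Y ⧸ (range f ⊔ ker g)) := by
  haveI := hcf
  have e : ((Y ⧸ range f) ⧸ ((range f ⊔ ker g)).map (range f).mkQ)
      ≃ₗ[K] (Y ⧸ (range f ⊔ ker g)) :=
    Submodule.quotientQuotientEquivQuotient (range f) (range f ⊔ ker g) le_sup_left
  exact e.finiteDimensional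

/-- Additivity of the algebraic index under composition. -/
theorem index_comp (f : X →ₗ[K] Y) (g : Y →ₗ[K] Z)
    (hkf : FiniteDimensional K (ker f)) (hcf : FiniteDimensional K (Y ⧸ range f))
    (hkg : FiniteDimensional K (ker g)) (hcg : FiniteDimensional K (Z ⧸ range g)) :
    FiniteDimensional K (ker (g ∘ₗ f)) ∧ FiniteDimensional K (Z ⧸ range (g ∘ₗ f)) ∧
      (finrank K (ker (g ∘ₗ f)) : ℤ) - finrank K (Z ⧸ range (g ∘ₗ f))
        = ((finrank K (ker f) : ℤ) - finrank K (Y ⧸ range f))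
          + ((finrank K (ker g) : ℤ) - finrank K (Z ⧸ range g)) := by
  obtain ⟨h1, h2⟩ := coker_comp_aux f g (fd_quot_sup f g hcf) hcg
  refine ⟨ker_comp_fd f g hkf hkg, h1, ?_⟩
  have h3 := finrank_ker_comp f g hkf hkg
  have h4 := beta_identity f g hcf hkg
  rw [h2, h3]
  push_cast
  omega

/-- A finite-rank perturbation of the identity has index zero. -/
theorem index_one_add_finite_rank (f : X →ₗ[K] X)
    (h : FiniteDimensional K (range (f - LinearMap.id))) :
    FiniteDimensional K (ker f) ∧ FiniteDimensional K (X ⧸ range f) ∧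
      finrank K (ker f) = finrank K (X ⧸ range f) := by
  haveI := h
  set Z := range (f - LinearMap.id) with hZ
  have hker : ker f ≤ Z := by
    intro x hx
    simp only [LinearMap.mem_ker] at hx
    exact ⟨-x, by simp [hx]⟩
  have hZmem : ∀ x : X, f x - x ∈ Z := fun x => ⟨x, by simp⟩
  have hsup : Z ⊔ range f = ⊤ := by
    rw [eq_top_iff]
    intro x _
    have : x = -(f x - x) + f x := by abel
    exact this ▸ Submodule.add_mem_sup (Submodule.neg_mem _ (hZmem x)) (LinearMap.mem_range_self f x)
  -- χ : Z → coker f is surjective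
  set χ : ↥Z →ₗ[K] (X ⧸ range f) := ((range f).mkQ).domRestrict Z with hχ
  have hχsurj : Function.Surjective χ := by
    intro q
    obtain ⟨x, rfl⟩ := Submodule.mkQ_surjective (range f) q
    have hx : x ∈ Z ⊔ range f := hsup ▸ Submodule.mem_top
    rcases Submodule.mem_sup.mp hx with ⟨a, ha, b, hb, rfl⟩
    refine ⟨⟨a, ha⟩, ?_⟩
    simp only [hχ, LinearMap.domRestrict_apply, Submodule.mkQ_apply]
    rw [Submodule.Quotient.mk_add, (Submodule.Quotient.mk_eq_zero _).mpr hb, add_zero]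
  have hkχ : ker χ = (range f).comap Z.subtype := by
    ext x; simp [hχ, Submodule.Quotient.mk_eq_zero]
  -- coker f ≃ Z ⧸ ker χ
  have e1 : (↥Z ⧸ ker χ) ≃ₗ[K] (X ⧸ range f) := χ.quotKerEquivOfSurjective hχsurj
  haveI hfdcoker : FiniteDimensional K (X ⧸ range f) := e1.finiteDimensional
  haveI hfdker : FiniteDimensional K (ker f) := Submodule.finiteDimensional_of_le hker
  refine ⟨hfdker, hfdcoker, ?_⟩
  -- Z ⊓ range f = f(Z)
  set ρ : ↥Z →ₗ[K] X := f.domRestrict Z with hρ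
  have hZinf : Z.map f = Z ⊓ range f := by
    ext x
    constructor
    · rintro ⟨z, hz, rfl⟩
      refine ⟨?_, LinearMap.mem_range_self f z⟩
      have : f z = z + (f z - z) := by abel
      exact this ▸ Submodule.add_mem Z hz (hZmem z)
    · rintro ⟨hxZ, w, rfl⟩
      have hw : w ∈ Z := by
        have : w = f w - (f w - w) := by abel
        exact this ▸ Submodule.sub_mem Z hxZ (hZmem w)
      exact ⟨w, hw, rfl⟩
  have A1 := Submodule.finrank_quotient_add_finrank (ker χ)
  have A2 := ρ.finrank_range_add_finrank_ker
  have B1 : finrank K (↥Z ⧸ ker χ) = finrank K (X ⧸ range f) := e1.finrank_eq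
  have B2 : finrank K (ker χ) = finrank K ↥(Z ⊓ range f) := by
    rw [hkχ]; exact (comapSubtypeEquivInf Z (range f)).finrank_eq
  have B3 : finrank K (range ρ) = finrank K ↥(Z ⊓ range f) := by
    rw [hρ, LinearMap.range_domRestrict, hZinf]
  have B4 : finrank K (ker ρ) = finrank K (ker f) := by
    have : ker ρ = (ker f).comap Z.subtype := by
      ext x; simp [hρ]
    rw [this]; exact (Submodule.comapSubtypeEquivOfLe hker).finrank_eq
  omega

theorem fd_coker_of_comp (f : X →ₗ[K] Y) (g : Y →ₗ[K] Z)
    (h : FiniteDimensional K (Z ⧸ range (g ∘ₗ f))) :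
    FiniteDimensional K (Z ⧸ range g) := by
  haveI := h
  exact (Submodule.quotientQuotientEquivQuotient (range (g ∘ₗ f)) (range g)
    (LinearMap.range_comp_le_range f g)).finiteDimensional

end Alg

section Approx

theorem compact_approx {E : Type*} [NormedAddCommGroup E] [InnerProductSpace ℝ E]
    [CompleteSpace E] (f : E →L[ℝ] E) (hf : IsCompactOperator ⇑f) :
    ∃ F : E →L[ℝ] E, FiniteDimensional ℝ (range (F : E →ₗ[ℝ] E)) ∧ ‖f - F‖ < 1 := by
  obtain ⟨C, hC, him⟩ :=
    IsCompactOperator.image_closedBall_subset_compact (f := (f : E →ₗ[ℝ] E)) hf 1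
  obtain ⟨t, htf, htsub⟩ := (Metric.totallyBounded_iff.mp hC.totallyBounded) (1/2) (by norm_num)
  set Y := Submodule.span ℝ t with hY
  haveI : FiniteDimensional ℝ Y := FiniteDimensional.span_of_finite ℝ htf
  set F : E →L[ℝ] E := Y.subtypeL ∘L ((orthogonalProjection Y) ∘L f) with hF
  have hFapp : ∀ z : E, F z = (orthogonalProjection Y (f z) : E) := fun z => rfl
  refine ⟨F, ?_, ?_⟩
  · apply Submodule.finiteDimensional_of_le (S₂ := Y)
    rintro _ ⟨x, rfl⟩
    have : F x ∈ Y := by rw [hFapp x]; exact SetLike.coe_mem _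
    exact this
  · have hb : ∀ z : E, ‖z‖ ≤ 1 → ‖f z - F z‖ ≤ 1/2 := by
      intro z hz
      have hfz : f z ∈ C := him ⟨z, by simpa [Metric.mem_closedBall, dist_eq_norm] using hz, rfl⟩
      obtain ⟨y, hyt, hy⟩ := Set.mem_iUnion₂.mp (htsub hfz)
      have hyY : y ∈ Y := Submodule.subset_span hyt
      have hmin : ‖f z - (orthogonalProjection Y (f z) : E)‖ ≤ ‖f z - y‖ := by
        rw [← Submodule.starProjection_apply, Submodule.starProjection_minimal]
        exact ciInf_le ⟨0, by rintro _ ⟨x, rfl⟩; exact norm_nonneg _⟩ (⟨y, hyY⟩ : Y)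
      have hlt : ‖f z - y‖ < 1/2 := by simpa [dist_eq_norm] using hy
      rw [hFapp z]; linarith
    have hnorm : ‖f - F‖ ≤ 1/2 := by
      apply ContinuousLinearMap.opNorm_le_bound _ (by norm_num)
      intro x
      rcases eq_or_ne x 0 with rfl | hx
      · simp
      · have hxpos : 0 < ‖x‖ := norm_pos_iff.mpr hx
        have h1 : ‖(‖x‖)⁻¹ • x‖ ≤ 1 := by
          rw [norm_smul, norm_inv, norm_norm, inv_mul_cancel₀ (ne_of_gt hxpos)]
        have h2 := hb ((‖x‖)⁻¹ • x) h1
        have h3 : (f - F) x = ‖x‖ • (f ((‖x‖)⁻¹ • x) - F ((‖x‖)⁻¹ • x)) := by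
          rw [smul_sub, ← map_smul, ← map_smul, smul_inv_smul₀ (ne_of_gt hxpos)]
          simp
        rw [h3, norm_smul, norm_norm]
        calc ‖x‖ * ‖f ((‖x‖)⁻¹ • x) - F ((‖x‖)⁻¹ • x)‖ ≤ ‖x‖ * (1/2) :=
              mul_le_mul_of_nonneg_left h2 (norm_nonneg x)
          _ = 1/2 * ‖x‖ := by ring
    linarith

end Approx

section Fredholm

variable {E : Type*} [NormedAddCommGroup E] [InnerProductSpace ℝ E] [CompleteSpace E]

theorem index_one_add_compact (k : E →L[ℝ] E) (hk : IsCompactOperator ⇑k) :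
    FiniteDimensional ℝ (ker ((1 + k : E →L[ℝ] E) : E →ₗ[ℝ] E)) ∧
      FiniteDimensional ℝ (E ⧸ range ((1 + k : E →L[ℝ] E) : E →ₗ[ℝ] E)) ∧
      finrank ℝ (ker ((1 + k : E →L[ℝ] E) : E →ₗ[ℝ] E))
        = finrank ℝ (E ⧸ range ((1 + k : E →L[ℝ] E) : E →ₗ[ℝ] E)) := by
  obtain ⟨F, hFfd, hFnorm⟩ := compact_approx k hk
  have hnorm' : ‖F - k‖ < 1 := by rwa [norm_sub_rev] at hFnorm
  set u : (E →L[ℝ] E)ˣ := Units.oneSub (F - k) hnorm' with hu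
  set h : E →L[ℝ] E := 1 + (↑u⁻¹ * F) with hh
  have hmul : (1 + k : E →L[ℝ] E) = ↑u * h := by
    rw [hh, mul_add, mul_one, ← mul_assoc, u.mul_inv, one_mul]
    show (1 + k : E →L[ℝ] E) = 1 - (F - k) + F
    abel
  -- index of h is zero via finite rank perturbation
  have hdiff : (h : E →ₗ[ℝ] E) - LinearMap.id = ((↑u⁻¹ * F : E →L[ℝ] E) : E →ₗ[ℝ] E) := by
    ext x; simp [hh]
  have hrfd : FiniteDimensional ℝ (range ((h : E →ₗ[ℝ] E) - LinearMap.id)) := by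
    rw [hdiff, ContinuousLinearMap.mul_def, ContinuousLinearMap.toLinearMap_comp, LinearMap.range_comp]
    haveI := hFfd
    infer_instance
  obtain ⟨hk1, hc1, heq1⟩ := index_one_add_finite_rank (h : E →ₗ[ℝ] E) hrfd
  -- transfer along the unit u
  have h1 : ((↑u : E →L[ℝ] E) : E →ₗ[ℝ] E) ∘ₗ ((↑u⁻¹ : E →L[ℝ] E) : E →ₗ[ℝ] E)
      = LinearMap.id := by
    ext x
    have := ContinuousLinearMap.ext_iff.mp u.mul_inv x
    simp only [ContinuousLinearMap.mul_apply, ContinuousLinearMap.one_apply] at this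
    exact this
  have h2 : ((↑u⁻¹ : E →L[ℝ] E) : E →ₗ[ℝ] E) ∘ₗ ((↑u : E →L[ℝ] E) : E →ₗ[ℝ] E)
      = LinearMap.id := by
    ext x
    have := ContinuousLinearMap.ext_iff.mp u.inv_mul x
    simp only [ContinuousLinearMap.mul_apply, ContinuousLinearMap.one_apply] at this
    exact this
  set e : E ≃ₗ[ℝ] E := LinearEquiv.ofLinear ((↑u : E →L[ℝ] E) : E →ₗ[ℝ] E)
    ((↑u⁻¹ : E →L[ℝ] E) : E →ₗ[ℝ] E) h1 h2 with he
  have hinj : Function.Injective ⇑((↑u : E →L[ℝ] E) : E →ₗ[ℝ] E) := by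
    intro a b hab
    have ha := LinearMap.ext_iff.mp h2 a
    have hb := LinearMap.ext_iff.mp h2 b
    simp only [LinearMap.comp_apply, LinearMap.id_apply] at ha hb
    rw [← ha, ← hb, hab]
  have hcoe : ((1 + k : E →L[ℝ] E) : E →ₗ[ℝ] E)
      = ((↑u : E →L[ℝ] E) : E →ₗ[ℝ] E) ∘ₗ (h : E →ₗ[ℝ] E) := by
    rw [hmul, ContinuousLinearMap.mul_def, ContinuousLinearMap.toLinearMap_comp]
  have hker : ker ((1 + k : E →L[ℝ] E) : E →ₗ[ℝ] E) = ker (h : E →ₗ[ℝ] E) := by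
    rw [hcoe, LinearMap.ker_comp, LinearMap.ker_eq_bot.mpr hinj, Submodule.comap_bot]
  have hmap : (range (h : E →ₗ[ℝ] E)).map (e : E →ₗ[ℝ] E)
      = range ((1 + k : E →L[ℝ] E) : E →ₗ[ℝ] E) := by
    rw [hcoe, LinearMap.range_comp]
    rfl
  have ecoker := Submodule.Quotient.equiv (range (h : E →ₗ[ℝ] E))
    (range ((1 + k : E →L[ℝ] E) : E →ₗ[ℝ] E)) e hmap
  haveI := hc1
  refine ⟨hker ▸ hk1, ecoker.finiteDimensional, ?_⟩
  rw [hker, ← ecoker.finrank_eq]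
  exact heq1

end Fredholm

section Proj

variable {H : Type*} [NormedAddCommGroup H] [InnerProductSpace ℝ H] [CompleteSpace H]

/-- The restriction of the orthogonal projection onto `V` to `U`. -/
noncomputable def res (U V : Submodule ℝ H) [CompleteSpace V] : ↥U →L[ℝ] ↥V :=
  (orthogonalProjection V).comp U.subtypeL

/-- The kernel of `res U V` is `U ⊓ Vᗮ`. -/
noncomputable def kerResEquiv (U V : Submodule ℝ H) [CompleteSpace V] :
    ↥(ker ((res U V : ↥U →L[ℝ] ↥V) : ↥U →ₗ[ℝ] ↥V)) ≃ₗ[ℝ] ↥(U ⊓ Vᗮ) where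
  toFun x := ⟨x.1.1, x.1.2, by
    have hx : orthogonalProjection V (x.1 : H) = 0 := x.2
    exact orthogonalProjection_eq_zero_iff.mp hx⟩
  map_add' _ _ := rfl
  map_smul' _ _ := rfl
  invFun y := ⟨⟨y.1, y.2.1⟩, by
    have : orthogonalProjection V (y.1 : H) = 0 := orthogonalProjection_eq_zero_iff.mpr y.2.2
    exact this⟩
  left_inv x := Subtype.ext (Subtype.ext rfl)
  right_inv y := Subtype.ext rfl

theorem finrank_ker_res (U V : Submodule ℝ H) [CompleteSpace V] :
    finrank ℝ (ker ((res U V : ↥U →L[ℝ] ↥V) : ↥U →ₗ[ℝ] ↥V)) = finrank ℝ ↥(U ⊓ Vᗮ) :=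
  (kerResEquiv U V).finrank_eq

theorem fd_inf_orth (U V : Submodule ℝ H) [CompleteSpace V]
    (h : FiniteDimensional ℝ (ker ((res U V : ↥U →L[ℝ] ↥V) : ↥U →ₗ[ℝ] ↥V))) :
    FiniteDimensional ℝ ↥(U ⊓ Vᗮ) := by
  haveI := h; exact (kerResEquiv U V).finiteDimensional

/-- `V ⊓ Uᗮ` injects into the cokernel of `res U V`. -/
theorem finrank_inf_le_coker (U V : Submodule ℝ H) [CompleteSpace V]
    (hfd : FiniteDimensional ℝ (↥V ⧸ range ((res U V : ↥U →L[ℝ] ↥V) : ↥U →ₗ[ℝ] ↥V))) :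
    finrank ℝ ↥(V ⊓ Uᗮ)
      ≤ finrank ℝ (↥V ⧸ range ((res U V : ↥U →L[ℝ] ↥V) : ↥U →ₗ[ℝ] ↥V)) := by
  haveI := hfd
  set R := range ((res U V : ↥U →L[ℝ] ↥V) : ↥U →ₗ[ℝ] ↥V) with hR
  set φ : ↥(V ⊓ Uᗮ) →ₗ[ℝ] (↥V ⧸ R) := R.mkQ ∘ₗ Submodule.inclusion inf_le_left with hφ
  have hinj : Function.Injective ⇑φ := by
    rw [← LinearMap.ker_eq_bot]
    rw [eq_bot_iff]
    intro x hx
    simp only [LinearMap.mem_ker, hφ, LinearMap.comp_apply, Submodule.mkQ_apply,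
      Submodule.Quotient.mk_eq_zero] at hx
    obtain ⟨u, hu⟩ := hx
    -- hu : res U V u = inclusion x
    have hcoe : (orthogonalProjection V (u : H) : H) = (x.1 : H) := by
      have := congrArg (Subtype.val) hu
      exact this
    have hxV : (x.1 : H) ∈ V := x.2.1
    have hxUorth : (x.1 : H) ∈ Uᗮ := x.2.2
    have h1 : (inner ℝ ((x.1 : H)) ((u : H) - (orthogonalProjection V (u : H) : H)) : ℝ) = 0 := by
      have hmem := Submodule.sub_starProjection_mem_orthogonal (K := V) (u : H)
      exact (Submodule.mem_orthogonal V _).mp hmem _ hxV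
    have h2 : (inner ℝ ((x.1 : H)) ((u : H)) : ℝ) = 0 := by
      rw [real_inner_comm]
      exact hxUorth _ u.2
    have h3 : (inner ℝ ((x : H)) ((x : H)) : ℝ) = 0 := by
      calc (inner ℝ ((x : H)) ((x : H)) : ℝ)
          = inner ℝ ((x : H)) ((orthogonalProjection V (u : H) : H)) := by rw [hcoe]
        _ = (inner ℝ ((x : H)) ((u : H)) : ℝ)
            - inner ℝ ((x : H)) ((u : H) - (orthogonalProjection V (u : H) : H)) := by
              rw [inner_sub_right]; ring
        _ = 0 := by rw [h1, h2, sub_zero]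
    simp only [Submodule.mem_bot]
    exact Subtype.ext (inner_self_eq_zero.mp h3)
  exact LinearMap.finrank_le_finrank_of_injective hinj

end Proj

section Pair

variable {H : Type*} [NormedAddCommGroup H] [InnerProductSpace ℝ H] [CompleteSpace H]

theorem res_comp_eq (U V : Submodule ℝ H) [CompleteSpace U] [CompleteSpace V] :
    (res V U).comp (res U V) = 1 + ((orthogonalProjection U).comp
      ((V.subtypeL.comp (orthogonalProjection V)
        - U.subtypeL.comp (orthogonalProjection U)).comp U.subtypeL)) := by
  ext x
  simp only [res, ContinuousLinearMap.comp_apply, ContinuousLinearMap.add_apply,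
    ContinuousLinearMap.one_apply, ContinuousLinearMap.sub_apply, map_sub,
    Submodule.subtypeL_apply, Submodule.coe_subtypeL, orthogonalProjection_mem_subspace_eq_self]
  push_cast
  abel

theorem res_comp3_eq (U V W : Submodule ℝ H) [CompleteSpace U] [CompleteSpace V]
    [CompleteSpace W] :
    (res W U).comp ((res V W).comp (res U V)) = 1 + ((orthogonalProjection U).comp
      (((W.subtypeL.comp (orthogonalProjection W)
          - U.subtypeL.comp (orthogonalProjection U)).comp
            (V.subtypeL.comp (orthogonalProjection V))
        + (V.subtypeL.comp (orthogonalProjection V)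
          - U.subtypeL.comp (orthogonalProjection U))).comp U.subtypeL)) := by
  ext x
  simp only [res, ContinuousLinearMap.comp_apply, ContinuousLinearMap.add_apply,
    ContinuousLinearMap.one_apply, ContinuousLinearMap.sub_apply, map_sub, map_add,
    Submodule.subtypeL_apply, Submodule.coe_subtypeL, orthogonalProjection_mem_subspace_eq_self]
  push_cast
  abel

theorem compact_sandwich (U : Submodule ℝ H) [CompleteSpace U] {D : H →L[ℝ] H}
    (hD : IsCompactOperator ⇑D) :
    IsCompactOperator ⇑((orthogonalProjection U).comp (D.comp U.subtypeL)) := by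
  rw [ContinuousLinearMap.coe_comp', ContinuousLinearMap.coe_comp']
  exact (hD.comp_clm U.subtypeL).clm_comp (orthogonalProjection U)

/-- All index data for a commensurable pair. -/
theorem pair_facts (U V : Submodule ℝ H) [CompleteSpace U] [CompleteSpace V]
    (hUV : IsCompactOperator ⇑(U.subtypeL.comp (orthogonalProjection U)
      - V.subtypeL.comp (orthogonalProjection V))) :
    FiniteDimensional ℝ (ker ((res U V : ↥U →L[ℝ] ↥V) : ↥U →ₗ[ℝ] ↥V)) ∧
    FiniteDimensional ℝ (↥V ⧸ range ((res U V : ↥U →L[ℝ] ↥V) : ↥U →ₗ[ℝ] ↥V)) ∧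
    ((finrank ℝ (ker ((res U V : ↥U →L[ℝ] ↥V) : ↥U →ₗ[ℝ] ↥V)) : ℤ)
      - finrank ℝ (↥V ⧸ range ((res U V : ↥U →L[ℝ] ↥V) : ↥U →ₗ[ℝ] ↥V)))
      = (finrank ℝ ↥(U ⊓ Vᗮ) : ℤ) - finrank ℝ ↥(V ⊓ Uᗮ) := by
  have hVU : IsCompactOperator ⇑(V.subtypeL.comp (orthogonalProjection V)
      - U.subtypeL.comp (orthogonalProjection U)) := by
    have := hUV.neg
    rwa [show -⇑(U.subtypeL.comp (orthogonalProjection U)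
        - V.subtypeL.comp (orthogonalProjection V))
      = ⇑(V.subtypeL.comp (orthogonalProjection V)
        - U.subtypeL.comp (orthogonalProjection U)) by funext x; simp] at this
  -- the two compact perturbations
  set KU := (orthogonalProjection U).comp
    ((V.subtypeL.comp (orthogonalProjection V)
      - U.subtypeL.comp (orthogonalProjection U)).comp U.subtypeL) with hKU
  set KV := (orthogonalProjection V).comp
    ((U.subtypeL.comp (orthogonalProjection U)
      - V.subtypeL.comp (orthogonalProjection V)).comp V.subtypeL) with hKV
  have hKUc : IsCompactOperator ⇑KU := compact_sandwich U hVU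
  have hKVc : IsCompactOperator ⇑KV := compact_sandwich V hUV
  obtain ⟨fdTUk, fdTUc, eqTU⟩ := index_one_add_compact KU hKUc
  obtain ⟨fdTVk, fdTVc, eqTV⟩ := index_one_add_compact KV hKVc
  have hceqU : ((res V U : ↥V →L[ℝ] ↥U) : ↥V →ₗ[ℝ] ↥U) ∘ₗ
      ((res U V : ↥U →L[ℝ] ↥V) : ↥U →ₗ[ℝ] ↥V)
      = ((1 + KU : ↥U →L[ℝ] ↥U) : ↥U →ₗ[ℝ] ↥U) := by
    rw [← ContinuousLinearMap.toLinearMap_comp, res_comp_eq U V]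
  have hceqV : ((res U V : ↥U →L[ℝ] ↥V) : ↥U →ₗ[ℝ] ↥V) ∘ₗ
      ((res V U : ↥V →L[ℝ] ↥U) : ↥V →ₗ[ℝ] ↥U)
      = ((1 + KV : ↥V →L[ℝ] ↥V) : ↥V →ₗ[ℝ] ↥V) := by
    rw [← ContinuousLinearMap.toLinearMap_comp, res_comp_eq V U]
  -- finite dimensionality of kernels
  have fdkUV : FiniteDimensional ℝ (ker ((res U V : ↥U →L[ℝ] ↥V) : ↥U →ₗ[ℝ] ↥V)) := by
    haveI : FiniteDimensional ℝ
        (ker (((res V U : ↥V →L[ℝ] ↥U) : ↥V →ₗ[ℝ] ↥U) ∘ₗ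
          ((res U V : ↥U →L[ℝ] ↥V) : ↥U →ₗ[ℝ] ↥V))) := by rw [hceqU]; exact fdTUk
    have hle : ker ((res U V : ↥U →L[ℝ] ↥V) : ↥U →ₗ[ℝ] ↥V)
        ≤ ker (((res V U : ↥V →L[ℝ] ↥U) : ↥V →ₗ[ℝ] ↥U) ∘ₗ
          ((res U V : ↥U →L[ℝ] ↥V) : ↥U →ₗ[ℝ] ↥V)) := fun x hx => LinearMap.mem_ker.mpr
      (by rw [LinearMap.comp_apply, LinearMap.mem_ker.mp hx, map_zero])
    exact Submodule.finiteDimensional_of_le hle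
  have fdkVU : FiniteDimensional ℝ (ker ((res V U : ↥V →L[ℝ] ↥U) : ↥V →ₗ[ℝ] ↥U)) := by
    haveI : FiniteDimensional ℝ
        (ker (((res U V : ↥U →L[ℝ] ↥V) : ↥U →ₗ[ℝ] ↥V) ∘ₗ
          ((res V U : ↥V →L[ℝ] ↥U) : ↥V →ₗ[ℝ] ↥U))) := by rw [hceqV]; exact fdTVk
    have hle : ker ((res V U : ↥V →L[ℝ] ↥U) : ↥V →ₗ[ℝ] ↥U)
        ≤ ker (((res U V : ↥U →L[ℝ] ↥V) : ↥U →ₗ[ℝ] ↥V) ∘ₗ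
          ((res V U : ↥V →L[ℝ] ↥U) : ↥V →ₗ[ℝ] ↥U)) := fun x hx => LinearMap.mem_ker.mpr
      (by rw [LinearMap.comp_apply, LinearMap.mem_ker.mp hx, map_zero])
    exact Submodule.finiteDimensional_of_le hle
  -- finite dimensionality of cokernels
  have fdcVU : FiniteDimensional ℝ (↥U ⧸ range ((res V U : ↥V →L[ℝ] ↥U) : ↥V →ₗ[ℝ] ↥U)) := by
    apply fd_coker_of_comp ((res U V : ↥U →L[ℝ] ↥V) : ↥U →ₗ[ℝ] ↥V)
    rw [hceqU]; exact fdTUc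
  have fdcUV : FiniteDimensional ℝ (↥V ⧸ range ((res U V : ↥U →L[ℝ] ↥V) : ↥U →ₗ[ℝ] ↥V)) := by
    apply fd_coker_of_comp ((res V U : ↥V →L[ℝ] ↥U) : ↥V →ₗ[ℝ] ↥U)
    rw [hceqV]; exact fdTVc
  refine ⟨fdkUV, fdcUV, ?_⟩
  -- index additivity
  obtain ⟨_, _, hadd⟩ := index_comp ((res U V : ↥U →L[ℝ] ↥V) : ↥U →ₗ[ℝ] ↥V)
    ((res V U : ↥V →L[ℝ] ↥U) : ↥V →ₗ[ℝ] ↥U) fdkUV fdcUV fdkVU fdcVU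
  rw [hceqU] at hadd
  rw [eqTU] at hadd
  -- hadd : 0 = ind (res U V) + ind (res V U)
  have hk1 := finrank_ker_res U V
  have hk2 := finrank_ker_res V U
  have hle1 := finrank_inf_le_coker U V fdcUV
  have hle2 := finrank_inf_le_coker V U fdcVU
  rw [hk1, hk2] at hadd
  rw [hk1]
  omega

end Pair


/-- Additivity of the relative dimension (4.1.1): if `U, V, W` are pairwise
commensurable closed subspaces of a real Hilbert space (their orthogonal
projections differ by compact operators), then
`dim(U,V) = dim(U,W) + dim(W,V)`, where
`dim(X,Y) = finrank (X ⊓ Yᗮ) - finrank (Y ⊓ Xᗮ)` as an integer. -/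
theorem relative_dimension_additive
    {H : Type*} [NormedAddCommGroup H] [InnerProductSpace ℝ H] [CompleteSpace H]
    (U V W : Submodule ℝ H)
    (hU : IsClosed (U : Set H)) (hV : IsClosed (V : Set H)) (hW : IsClosed (W : Set H))
    [CompleteSpace U] [CompleteSpace V] [CompleteSpace W]
    (hUW : IsCompactOperator
      ⇑(U.subtypeL.comp (U.orthogonalProjectionOnto) - W.subtypeL.comp (W.orthogonalProjectionOnto)))
    (hWV : IsCompactOperator
      ⇑(W.subtypeL.comp (W.orthogonalProjectionOnto) - V.subtypeL.comp (V.orthogonalProjectionOnto))) :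
    (Module.finrank ℝ ↥(U ⊓ Vᗮ) : ℤ) - (Module.finrank ℝ ↥(V ⊓ Uᗮ) : ℤ) =
      ((Module.finrank ℝ ↥(U ⊓ Wᗮ) : ℤ) - (Module.finrank ℝ ↥(W ⊓ Uᗮ) : ℤ)) +
      ((Module.finrank ℝ ↥(W ⊓ Vᗮ) : ℤ) - (Module.finrank ℝ ↥(V ⊓ Wᗮ) : ℤ)) := by
  have hUVc : IsCompactOperator ⇑(U.subtypeL.comp (orthogonalProjection U)
      - V.subtypeL.comp (orthogonalProjection V)) := by
    have := hUW.add hWV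
    rwa [show ⇑(U.subtypeL.comp (orthogonalProjection U) - W.subtypeL.comp (orthogonalProjection W))
        + ⇑(W.subtypeL.comp (orthogonalProjection W) - V.subtypeL.comp (orthogonalProjection V))
        = ⇑(U.subtypeL.comp (orthogonalProjection U) - V.subtypeL.comp (orthogonalProjection V)) by
      funext x
      simp only [ContinuousLinearMap.coe_sub', Pi.sub_apply, Pi.add_apply]
      abel] at this
  have hVWc : IsCompactOperator ⇑(V.subtypeL.comp (orthogonalProjection V)
      - W.subtypeL.comp (orthogonalProjection W)) := by
    have := hWV.neg
    rwa [show -⇑(W.subtypeL.comp (orthogonalProjection W) - V.subtypeL.comp (orthogonalProjection V))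
        = ⇑(V.subtypeL.comp (orthogonalProjection V) - W.subtypeL.comp (orthogonalProjection W)) by
      funext x
      simp only [ContinuousLinearMap.coe_sub', Pi.sub_apply, Pi.neg_apply]
      abel] at this
  have hWUc : IsCompactOperator ⇑(W.subtypeL.comp (orthogonalProjection W)
      - U.subtypeL.comp (orthogonalProjection U)) := by
    have := hUW.neg
    rwa [show -⇑(U.subtypeL.comp (orthogonalProjection U) - W.subtypeL.comp (orthogonalProjection W))
        = ⇑(W.subtypeL.comp (orthogonalProjection W) - U.subtypeL.comp (orthogonalProjection U)) by
      funext x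
      simp only [ContinuousLinearMap.coe_sub', Pi.sub_apply, Pi.neg_apply]
      abel] at this
  obtain ⟨kUV, cUV, eUV⟩ := pair_facts U V hUVc
  obtain ⟨kVW, cVW, eVW⟩ := pair_facts V W hVWc
  obtain ⟨kWU, cWU, eWU⟩ := pair_facts W U hWUc
  -- the triple composition is a compact perturbation of the identity
  set K3 := (orthogonalProjection U).comp
    (((W.subtypeL.comp (orthogonalProjection W)
        - U.subtypeL.comp (orthogonalProjection U)).comp
          (V.subtypeL.comp (orthogonalProjection V))
      + (V.subtypeL.comp (orthogonalProjection V)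
        - U.subtypeL.comp (orthogonalProjection U))).comp U.subtypeL) with hK3
  have hK3c : IsCompactOperator ⇑K3 := by
    apply compact_sandwich
    have h1 : IsCompactOperator ⇑((W.subtypeL.comp (orthogonalProjection W)
        - U.subtypeL.comp (orthogonalProjection U)).comp
          (V.subtypeL.comp (orthogonalProjection V))) := by
      rw [ContinuousLinearMap.coe_comp']
      exact hWUc.comp_clm _
    have h2 : IsCompactOperator ⇑(V.subtypeL.comp (orthogonalProjection V)
        - U.subtypeL.comp (orthogonalProjection U)) := by
      have := hUVc.neg
      rwa [show -⇑(U.subtypeL.comp (orthogonalProjection U)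
          - V.subtypeL.comp (orthogonalProjection V))
          = ⇑(V.subtypeL.comp (orthogonalProjection V)
            - U.subtypeL.comp (orthogonalProjection U)) by
        funext x
        simp only [ContinuousLinearMap.coe_sub', Pi.sub_apply, Pi.neg_apply]
        abel] at this
    have := h1.add h2
    rwa [show ⇑((W.subtypeL.comp (orthogonalProjection W)
        - U.subtypeL.comp (orthogonalProjection U)).comp
          (V.subtypeL.comp (orthogonalProjection V)))
        + ⇑(V.subtypeL.comp (orthogonalProjection V)
          - U.subtypeL.comp (orthogonalProjection U))
        = ⇑((W.subtypeL.comp (orthogonalProjection W)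
            - U.subtypeL.comp (orthogonalProjection U)).comp
              (V.subtypeL.comp (orthogonalProjection V))
          + (V.subtypeL.comp (orthogonalProjection V)
            - U.subtypeL.comp (orthogonalProjection U))) by
      funext x
      simp] at this
  obtain ⟨fdT3k, fdT3c, eqT3⟩ := index_one_add_compact K3 hK3c
  have hceq3 : ((res W U : ↥W →L[ℝ] ↥U) : ↥W →ₗ[ℝ] ↥U) ∘ₗ
      (((res V W : ↥V →L[ℝ] ↥W) : ↥V →ₗ[ℝ] ↥W) ∘ₗ
        ((res U V : ↥U →L[ℝ] ↥V) : ↥U →ₗ[ℝ] ↥V))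
      = ((1 + K3 : ↥U →L[ℝ] ↥U) : ↥U →ₗ[ℝ] ↥U) := by
    rw [← ContinuousLinearMap.toLinearMap_comp, ← ContinuousLinearMap.toLinearMap_comp, res_comp3_eq U V W, hK3]
  obtain ⟨kc1, cc1, hadd1⟩ := index_comp
    ((res U V : ↥U →L[ℝ] ↥V) : ↥U →ₗ[ℝ] ↥V)
    ((res V W : ↥V →L[ℝ] ↥W) : ↥V →ₗ[ℝ] ↥W) kUV cUV kVW cVW
  obtain ⟨_, _, hadd2⟩ := index_comp
    (((res V W : ↥V →L[ℝ] ↥W) : ↥V →ₗ[ℝ] ↥W) ∘ₗ ((res U V : ↥U →L[ℝ] ↥V) : ↥U →ₗ[ℝ] ↥V))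
    ((res W U : ↥W →L[ℝ] ↥U) : ↥W →ₗ[ℝ] ↥U) kc1 cc1 kWU cWU
  rw [hceq3, eqT3, hadd1, eUV, eVW, eWU] at hadd2
  omega
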